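/- Let (M,<) be an ordered loopless matroid. The set of nbc bases (bases containing no broken circuit) forms an order ideal in the poset Int_<(M) of bases ordered by inclusion of internally passive sets: if B' is an nbc basis and IP(B) ⊆ IP(B') for bases B, B', then B is also an nbc basis. -/

import Mathlib

open Finset

/-- The set `IP(B)` of internally passive elements of `B`: elements `b ∈ B` that can be
exchanged for a strictly smaller element to obtain another base. -/
noncomputable def IP {α : Type*} [DecidableEq α] [LinearOrder α] (M : Matroid α)
    (B : Finset α) : Finset α := by
  classical
  exact B.filter fun b => ∃ b', b' < b ∧ M.IsBase ((insert b' (B.erase b) : Finset α) : Set α)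

/-- `C` is a circuit of `M`: a minimal dependent subset of the ground set. -/
def IsCircuitF {α : Type*} [DecidableEq α] (M : Matroid α) (C : Finset α) : Prop :=
  ↑C ⊆ M.E ∧ ¬M.Indep ↑C ∧ ∀ x ∈ C, M.Indep ↑(C.erase x)

/-- `D` is a broken circuit: a circuit with its smallest element removed. -/
def IsBrokenCircuit {α : Type*} [DecidableEq α] [LinearOrder α] (M : Matroid α)
    (D : Finset α) : Prop :=
  ∃ (C : Finset α) (hC : C.Nonempty), IsCircuitF M C ∧ D = C.erase (C.min' hC)


/-- Key lemma: a broken circuit contained in a base consists of internally passive elements. -/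
theorem brokenCircuit_subset_IP {α : Type*} [DecidableEq α] [LinearOrder α] {M : Matroid α}
    {B C : Finset α} (hC : C.Nonempty) (hcirc : (↑C : Set α) ⊆ M.E ∧ ¬M.Indep ↑C ∧
      ∀ x ∈ C, M.Indep ↑(C.erase x))
    (hB : M.IsBase ↑B) (hDB : C.erase (C.min' hC) ⊆ B) {b : α}
    (hb : b ∈ C.erase (C.min' hC)) :
    ∃ b', b' < b ∧ M.IsBase ((insert b' (B.erase b) : Finset α) : Set α) := by
  obtain ⟨hCE, hCdep, hCmin⟩ := hcirc
  set c := C.min' hC with hc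
  obtain ⟨hbc, hbC⟩ := Finset.mem_erase.mp hb
  have hcC : c ∈ C := C.min'_mem hC
  have hcb : c < b := lt_of_le_of_ne (C.min'_le b hbC) (Ne.symm hbc)
  have hbB : b ∈ B := hDB hb
  have hcE : c ∈ M.E := hCE hcC
  -- c ∉ B
  have hcB : c ∉ B := by
    intro hcB
    apply hCdep
    apply hB.indep.subset
    intro x hx
    rcases eq_or_ne x c with rfl | hxc
    · exact hcB
    · exact hDB (Finset.mem_erase.mpr ⟨hxc, hx⟩)
  -- J = B \ {b} is independent
  have hJ : M.Indep ((↑B : Set α) \ {b}) := hB.indep.subset Set.diff_subset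
  -- insert c (B \ {b}) is independent
  have hins : M.Indep (insert c ((↑B : Set α) \ {b})) := by
    have hcJ : c ∉ ((↑B : Set α) \ {b}) := fun h => hcB (by exact_mod_cast h.1)
    rw [hJ.insert_indep_iff_of_notMem hcJ]
    refine ⟨hcE, fun hccl => ?_⟩
    -- then b ∈ closure (C \ {b}) ⊆ closure (B \ {b}), contradiction
    have hCb : M.Indep ((↑C : Set α) \ {b}) := by
      have := hCmin b hbC
      rwa [Finset.coe_erase] at this
    have hbcl : b ∈ M.closure ((↑C : Set α) \ {b}) := by
      have hdep : M.Dep (insert b ((↑C : Set α) \ {b})) := by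
        rw [Set.insert_diff_singleton, Set.insert_eq_self.mpr (by exact_mod_cast hbC)]
        exact (M.not_indep_iff hCE).mp hCdep
      exact (hCb.insert_dep_iff.mp hdep).1
    have hsub : ((↑C : Set α) \ {b}) ⊆ insert c ((↑B : Set α) \ {b}) := by
      rintro x ⟨hxC, hxb⟩
      rcases eq_or_ne x c with rfl | hxc
      · exact Set.mem_insert _ _
      · refine Set.mem_insert_of_mem _ ⟨?_, hxb⟩
        have hxC' : x ∈ C := by exact_mod_cast hxC
        exact_mod_cast hDB (Finset.mem_erase.mpr ⟨hxc, hxC'⟩)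
    have hcl2 : M.closure ((↑C : Set α) \ {b}) ⊆ M.closure ((↑B : Set α) \ {b}) := by
      calc M.closure ((↑C : Set α) \ {b}) ⊆ M.closure (insert c ((↑B : Set α) \ {b})) :=
            M.closure_subset_closure hsub
        _ = M.closure ((↑B : Set α) \ {b}) := Matroid.closure_insert_eq_of_mem_closure hccl
    exact hB.indep.notMem_closure_sdiff_of_mem (by exact_mod_cast hbB) (hcl2 hbcl)
  -- exchange gives a base
  have hbase : M.IsBase (insert c ((↑B : Set α) \ {b})) :=
    hB.exchange_isBase_of_indep (by exact_mod_cast hcB) hins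
  refine ⟨c, hcb, ?_⟩
  have : ((insert c (B.erase b) : Finset α) : Set α) = insert c ((↑B : Set α) \ {b}) := by
    push_cast
    rfl
  rwa [this]

/-- In an ordered loopless matroid, the nbc bases form an order ideal in the poset
`Int_<(M)`: if `B'` is an nbc base and `IP(B) ⊆ IP(B')` for a base `B`, then `B` is
also an nbc base. -/
theorem nbc_orderIdeal {α : Type*} [DecidableEq α] [LinearOrder α] (M : Matroid α)
    (hloopless : ∀ a ∈ M.E, M.Indep {a}) (B B' : Finset α)
    (hB : M.IsBase ↑B) (hB' : M.IsBase ↑B')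
    (hnbc' : ∀ D : Finset α, IsBrokenCircuit M D → ¬D ⊆ B')
    (hle : IP M B ⊆ IP M B') :
    ∀ D : Finset α, IsBrokenCircuit M D → ¬D ⊆ B := by
  rintro D ⟨C, hC, hcirc, rfl⟩ hDB
  have hmemIP : ∀ b ∈ C.erase (C.min' hC), b ∈ IP M B := by
    intro b hb
    obtain ⟨c, hcb, hbase⟩ := brokenCircuit_subset_IP hC hcirc hB hDB hb
    simp only [IP, Finset.mem_filter]
    exact ⟨hDB hb, c, hcb, hbase⟩
  refine hnbc' (C.erase (C.min' hC)) ⟨C, hC, hcirc, rfl⟩ ?_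
  intro b hb
  have := hle (hmemIP b hb)
  simp only [IP, Finset.mem_filter] at this
  exact this.1
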